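/- arXiv:2601.10969 — 5 statements merged into one kernel-verified Lean document; each statement's English description precedes it below -/
import Mathlib

section
/- Let j, k be positive integers with j + k = 4, and let p ≥ 5 be a prime. Then (2p^k + 4p^j - 4)/((2p^j - 1)(2p^j - 4)) is not an integer, i.e., (2p^j - 1)(2p^j - 4) does not divide 2p^k + 4p^j - 4. -/
theorem stmt_0 (p j k : ℕ) (hp : p.Prime) (hp5 : 5 ≤ p)
    (hj : 0 < j) (hk : 0 < k) (hjk : j + k = 4) :
    ¬ ((2 * (p : ℤ) ^ j - 1) * (2 * (p : ℤ) ^ j - 4) ∣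
        2 * (p : ℤ) ^ k + 4 * (p : ℤ) ^ j - 4) := by
  have hp' : (5 : ℤ) ≤ (p : ℤ) := by exact_mod_cast hp5
  have hsq : (25 : ℤ) ≤ (p : ℤ) ^ 2 := by nlinarith
  have hcube : (125 : ℤ) ≤ (p : ℤ) ^ 3 := by nlinarith
  have hj3 : j ≤ 3 := by omega
  interval_cases j
  · -- j = 1, k = 3
    have hk3 : k = 3 := by omega
    subst hk3
    intro h
    have h1 : (2 * (p : ℤ) - 1) ∣ 2 * (p : ℤ) ^ 3 + 4 * (p : ℤ) ^ 1 - 4 := by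
      refine dvd_trans ?_ h
      simpa using dvd_mul_right (2 * (p : ℤ) ^ 1 - 1) (2 * (p : ℤ) ^ 1 - 4)
    obtain ⟨c, hc⟩ := h1
    have h7 : (2 * (p : ℤ) - 1) ∣ 7 :=
      ⟨4 * (p : ℤ) ^ 2 + 2 * (p : ℤ) + 9 - 4 * c, by linear_combination -4 * hc⟩
    have := Int.le_of_dvd (by norm_num) h7
    linarith
  · -- j = 2, k = 2
    have hk2 : k = 2 := by omega
    subst hk2
    intro h
    have hpos : (0 : ℤ) < 2 * (p : ℤ) ^ 2 + 4 * (p : ℤ) ^ 2 - 4 := by nlinarith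
    have := Int.le_of_dvd hpos h
    nlinarith [sq_nonneg ((p : ℤ) ^ 2 - 4), hsq]
  · -- j = 3, k = 1
    have hk1 : k = 1 := by omega
    subst hk1
    intro h
    have hple : (p : ℤ) ≤ (p : ℤ) ^ 3 := by nlinarith
    have hpos : (0 : ℤ) < 2 * (p : ℤ) ^ 1 + 4 * (p : ℤ) ^ 3 - 4 := by nlinarith
    have := Int.le_of_dvd hpos h
    nlinarith [sq_nonneg ((p : ℤ) ^ 3 - 4), hcube, hple]
end

section
/- Let j, k be positive integers with j + k = 4, and let p ≥ 5 be a prime. Then (2p^j - 1)(2p^j + 2) does not divide 2p^k + 4p^j + 2. -/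
theorem stmt_3 (p j k : ℕ) (hp : p.Prime) (hp5 : 5 ≤ p)
    (hj : 0 < j) (hk : 0 < k) (hjk : j + k = 4) :
    ¬ ((2 * (p : ℤ) ^ j - 1) * (2 * (p : ℤ) ^ j + 2) ∣
        2 * (p : ℤ) ^ k + 4 * (p : ℤ) ^ j + 2) := by
  intro h
  have hp' : (5:ℤ) ≤ (p:ℤ) := by exact_mod_cast hp5
  rcases (by omega : (j = 1 ∧ k = 3) ∨ (j = 2 ∧ k = 2) ∨ (j = 3 ∧ k = 1)) with
    ⟨rfl, rfl⟩ | ⟨rfl, rfl⟩ | ⟨rfl, rfl⟩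
  · -- j = 1, k = 3
    have h1 : (2 * (p:ℤ) ^ 1 - 1) ∣ (2 * (p:ℤ) ^ 3 + 4 * (p:ℤ) ^ 1 + 2) :=
      dvd_trans (dvd_mul_right _ _) h
    obtain ⟨c, hc⟩ := h1
    have h2 : (2 * (p:ℤ) - 1) ∣ 17 :=
      ⟨4 * c - (4 * (p:ℤ)^2 + 2 * p + 9), by linear_combination 4 * hc⟩
    have h3 := Int.le_of_dvd (by norm_num) h2
    have hp9 : p ≤ 9 := by
      have : (p:ℤ) ≤ 9 := by linarith
      exact_mod_cast this
    interval_cases p <;> revert h2 hp <;> norm_num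
  · -- j = 2, k = 2
    have hpos : (0:ℤ) < 2 * (p:ℤ) ^ 2 + 4 * (p:ℤ) ^ 2 + 2 := by positivity
    have := Int.le_of_dvd hpos h
    have hq : (25:ℤ) ≤ (p:ℤ)^2 := by nlinarith
    nlinarith [sq_nonneg ((p:ℤ)^2 - 13)]
  · -- j = 3, k = 1
    have hpos : (0:ℤ) < 2 * (p:ℤ) ^ 1 + 4 * (p:ℤ) ^ 3 + 2 := by positivity
    have := Int.le_of_dvd hpos h
    have hr : (125:ℤ) ≤ (p:ℤ)^3 := by
      calc (125:ℤ) = 5^3 := by norm_num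
      _ ≤ (p:ℤ)^3 := pow_le_pow_left₀ (by norm_num) hp' 3
    have hpr : (p:ℤ) ≤ (p:ℤ)^3 := le_self_pow₀ (by linarith) (by norm_num)
    nlinarith [sq_nonneg ((p:ℤ)^3 - 13)]
end

section
/- Let p ≥ 5 be a prime. Then the equation p·m·n − m − n = p³ has no solutions in positive odd integers m, n. -/
theorem stmt_5 (p : ℕ) (hp : p.Prime) (hp5 : 5 ≤ p) :
    ¬ ∃ m n : ℕ, 0 < m ∧ 0 < n ∧ Odd m ∧ Odd n ∧
      (p : ℤ) * m * n - m - n = (p : ℤ) ^ 3 := by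
  rintro ⟨m, n, hm, hn, om, onn, h⟩
  have hpodd : Odd p := hp.odd_of_ne_two (by omega)
  obtain ⟨a, ha⟩ := hpodd
  obtain ⟨b, hb⟩ := om
  obtain ⟨c, hc⟩ := onn
  subst ha hb hc
  have key : ((2*(a:ℤ)+1) * (2*b+1) - 1) * ((2*(a:ℤ)+1) * (2*c+1) - 1) = (2*(a:ℤ)+1)^4 + 1 := by
    push_cast at h
    linear_combination (2*(a:ℤ)+1) * h
  push_cast at key
  have e : 4 * ((2*(a:ℤ)*b+a+b) * (2*(a:ℤ)*c+a+c)) =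
      4 * (4*(a:ℤ)^4+8*(a:ℤ)^3+6*(a:ℤ)^2+2*(a:ℤ)) + 2 := by
    linear_combination key
  generalize hX : (2*(a:ℤ)*b+a+b) * (2*(a:ℤ)*c+a+c) = X at e
  generalize hY : 4*(a:ℤ)^4+8*(a:ℤ)^3+6*(a:ℤ)^2+2*(a:ℤ) = Y at e
  omega
end

section
/- Let p ≥ 5 be a prime, d = 1, k = 1, and suppose m, n are positive integers with m ≤ n satisfying p·m·n − m − n = p² and (m−2)(n−2) ≥ 6. Then no such m, n exist; i.e., the equation p·m·n − m − n = p² has no positive integer solutions with 2(m+n) ≤ mn − 2. -/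
theorem stmt_6 (p : ℕ) (hp : p.Prime) (hp5 : 5 ≤ p) :
    ¬ ∃ m n : ℕ, 0 < m ∧ 0 < n ∧ m ≤ n ∧
      2 * ((m : ℤ) + n) ≤ (m : ℤ) * n - 2 ∧
      (p : ℤ) * m * n - m - n = (p : ℤ) ^ 2 := by
  rintro ⟨m, n, hm, hn, hmn, h1, h2⟩
  have hp' : (5 : ℤ) ≤ (p : ℤ) := by exact_mod_cast hp5
  have hm' : (1 : ℤ) ≤ (m : ℤ) := by exact_mod_cast hm
  have hn' : (1 : ℤ) ≤ (n : ℤ) := by exact_mod_cast hn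
  -- m + n = p * (m*n - p)
  have key : (m : ℤ) + n = (p : ℤ) * ((m : ℤ) * n - p) := by ring_nf; linarith [h2]
  have hpos : (1 : ℤ) ≤ (m : ℤ) * n - p := by
    by_contra h
    push_neg at h
    have : (m : ℤ) * n - p ≤ 0 := by linarith
    nlinarith
  nlinarith
end

section
/- The complete list of unordered pairs {x, y} of integers with 3 ≤ x ≤ y (or x = 2 excluded; here x, y ≥ 3) such that xy − 2x − 2y > 0 and (xy − 2x − 2y) divides xy is: {3,7}, {3,8}, {3,9}, {3,12}, {3,15}, {3,24}, {4,5}, {4,6}, {4,8}, {4,12}, {5,5}, {5,20}, {6,6}, {6,12}, {8,8}. -/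
set_option maxHeartbeats 2000000


theorem stmt_14 (x y : ℤ) (hx : 3 ≤ x) (hxy : x ≤ y) :
    (0 < x * y - 2 * x - 2 * y ∧ (x * y - 2 * x - 2 * y) ∣ x * y) ↔
      (x, y) ∈ ({(3, 7), (3, 8), (3, 9), (3, 12), (3, 15), (3, 24),
        (4, 5), (4, 6), (4, 8), (4, 12), (5, 5), (5, 20),
        (6, 6), (6, 12), (8, 8)} : Set (ℤ × ℤ)) := by
  constructor
  · rintro ⟨h1, h2⟩
    have h3 : (x * y - 2 * x - 2 * y) ∣ 2 * x + 2 * y := by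
      have h := dvd_sub h2 (dvd_refl (x * y - 2 * x - 2 * y))
      have e : x * y - (x * y - 2 * x - 2 * y) = 2 * x + 2 * y := by ring
      rwa [e] at h
    have hle : x * y - 2 * x - 2 * y ≤ 2 * x + 2 * y :=
      Int.le_of_dvd (by nlinarith) h3
    have hx8 : x ≤ 8 := by nlinarith
    have h4 : (x * y - 2 * x - 2 * y) ∣ 2 * x * x := by
      have a := h3.mul_left x
      have b := h2.mul_left 2
      have h := dvd_sub a b
      have e : x * (2 * x + 2 * y) - 2 * (x * y) = 2 * x * x := by ring
      rwa [e] at h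
    have h5 : x * y - 2 * x - 2 * y ≤ 2 * x * x :=
      Int.le_of_dvd (by nlinarith) h4
    simp only [Set.mem_insert_iff, Set.mem_singleton_iff, Prod.mk.injEq]
    interval_cases x <;>
      (have hy : y ≤ 24 := by omega) <;> interval_cases y <;> omega
  · intro h
    simp only [Set.mem_insert_iff, Set.mem_singleton_iff, Prod.mk.injEq] at h
    rcases h with ⟨rfl, rfl⟩ | ⟨rfl, rfl⟩ | ⟨rfl, rfl⟩ | ⟨rfl, rfl⟩ |
      ⟨rfl, rfl⟩ | ⟨rfl, rfl⟩ | ⟨rfl, rfl⟩ | ⟨rfl, rfl⟩ | ⟨rfl, rfl⟩ |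
      ⟨rfl, rfl⟩ | ⟨rfl, rfl⟩ | ⟨rfl, rfl⟩ | ⟨rfl, rfl⟩ | ⟨rfl, rfl⟩ |
      ⟨rfl, rfl⟩ <;> norm_num
end
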